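/- Let (T(t)) and (S(t)) be C₀-semigroups on a Banach space E with (A,dom(A)) the generator of (T(t)), 0 ∈ ρ(A), and extrapolation data (E₋₁,ι,T₋₁,A₋₁). Let (𝒰(t)) and (𝒱(t)) be the semigroups on 𝓛(E) left implemented by (T(t)) and (S(t)), and let 𝒢 be the generator of (𝒰(t)). Suppose 𝒦 ∈ 𝒮^{DS,τ_sot}_{t₀}(𝒰) is such that (𝒱(t)) is the corresponding perturbed semigroup, i.e., (𝒢₋₁+𝒦)|_{𝓛(E)} generates (𝒱(t)). Define B ∈ 𝓛(E,E₋₁) by Bx := (𝒦(Id))x. Then B ∈ 𝒮^{DS}_{t₀}(T) and the operator (A₋₁+B)|_E (domain {x ∈ E : A₋₁(ιx)+Bx ∈ ι(E)}) generates the C₀-semigroup (S(t)). -/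

import Mathlib

open Set Filter Topology MeasureTheory

variable {E E₁ : Type*} [NormedAddCommGroup E] [NormedSpace ℝ E]
  [NormedAddCommGroup E₁] [NormedSpace ℝ E₁]

/-- A `C₀`-semigroup on a Banach space `E`. -/
structure IsC0Semigroup (T : ℝ → E →L[ℝ] E) : Prop where
  map_zero : T 0 = 1
  map_add : ∀ s t : ℝ, 0 ≤ s → 0 ≤ t → T (s + t) = (T s).comp (T t)
  strongCont : ∀ x : E, ContinuousOn (fun t => T t x) (Ici (0:ℝ))

/-- The generator relation of a `C₀`-semigroup: `y = Ax`. -/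
def C0GenRel (T : ℝ → E →L[ℝ] E) (x y : E) : Prop :=
  Tendsto (fun t : ℝ => t⁻¹ • (T t x - x)) (nhdsWithin 0 (Ioi 0)) (nhds y)

/-- Extrapolation data `(E₋₁, ι, T₋₁, A₋₁)` for a `C₀`-semigroup `T` with `0 ∈ ρ(A)`:
`ι : E → E₋₁` is a continuous dense injection, `T₋₁` a `C₀`-semigroup on `E₋₁` extending `T`
via `ι`, whose generator `A₋₁` has domain `ι(E)`, extends `A`, and `Am = A₋₁ ∘ ι : E → E₋₁`
is an isomorphism. -/
structure ExtrapolationData (T : ℝ → E →L[ℝ] E) (T₁ : ℝ → E₁ →L[ℝ] E₁)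
    (ι : E →L[ℝ] E₁) (Am : E ≃L[ℝ] E₁) : Prop where
  c0T : IsC0Semigroup T
  c0T₁ : IsC0Semigroup T₁
  inj : Function.Injective ι
  dense : DenseRange ι
  intertwine : ∀ t : ℝ, 0 ≤ t → ∀ x : E, T₁ t (ι x) = ι (T t x)
  gen₁ : ∀ x : E, C0GenRel T₁ (ι x) (Am x)
  gen₁_dom : ∀ z y : E₁, C0GenRel T₁ z y → z ∈ Set.range ι
  gen_extends : ∀ x y : E, C0GenRel T x y → (Am x : E₁) = ι y
  zero_res : ∃ R : E →L[ℝ] E, (∀ y : E, C0GenRel T (R y) y) ∧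
    ∀ x y : E, C0GenRel T x y → x = R y

/-- The Desch–Schappacher admissibility class `𝒮^{DS}_{t₀}(T)` for a `C₀`-semigroup:
for every strongly continuous `𝓛(E)`-valued `F` the Volterra integrals take values in `ι(E)`,
give a strongly continuous `𝓛(E)`-valued function `V_B F`, and `‖V_B‖ ≤ q < 1`. -/
def MemSDS (T₁ : ℝ → E₁ →L[ℝ] E₁) (ι : E →L[ℝ] E₁) (B : E →L[ℝ] E₁) (t₀ : ℝ) : Prop :=
  ∃ q : ℝ, 0 ≤ q ∧ q < 1 ∧
    ∀ F : ℝ → E →L[ℝ] E, (∀ x : E, ContinuousOn (fun r => F r x) (Icc (0:ℝ) t₀)) →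
      ∃ G : ℝ → E →L[ℝ] E,
        (∀ t ∈ Icc (0:ℝ) t₀, ∀ x : E,
          ι (G t x) = ∫ r in (0:ℝ)..t, T₁ (t - r) (B (F r x))) ∧
        (∀ x : E, ContinuousOn (fun t => G t x) (Icc (0:ℝ) t₀)) ∧
        ∀ c : ℝ, (∀ s ∈ Icc (0:ℝ) t₀, ‖F s‖ ≤ c) → ∀ t ∈ Icc (0:ℝ) t₀, ‖G t‖ ≤ q * c

/-- The semigroup on `𝓛(E)` left implemented by `T`: `𝒰(t)C := T(t) ∘ C`. -/
noncomputable def implemented (T : ℝ → E →L[ℝ] E) (t : ℝ) :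
    (E →L[ℝ] E) →L[ℝ] (E →L[ℝ] E) :=
  ContinuousLinearMap.compL ℝ E E E (T t)

/-- The extrapolated implemented semigroup on `𝓛(E,E₋₁)`: `𝒰₋₁(t)S := T₋₁(t) ∘ S`. -/
noncomputable def implementedExt (T₁ : ℝ → E₁ →L[ℝ] E₁) (t : ℝ) :
    (E →L[ℝ] E₁) →L[ℝ] (E →L[ℝ] E₁) :=
  ContinuousLinearMap.compL ℝ E E₁ E₁ (T₁ t)

/-- Membership in the space `𝔛_{t₀}` of strongly `τ_sot`-continuous, norm-bounded,
bi-equicontinuous functions `F : [0,t₀] → 𝓛(𝓛(E))`. -/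
def MemXsot (t₀ : ℝ) (F : ℝ → (E →L[ℝ] E) →L[ℝ] (E →L[ℝ] E)) : Prop :=
  (∀ (C : E →L[ℝ] E) (x : E), ContinuousOn (fun t => (F t C) x) (Icc (0:ℝ) t₀)) ∧
  (∃ M : ℝ, ∀ t ∈ Icc (0:ℝ) t₀, ‖F t‖ ≤ M) ∧
  ∀ u : ℕ → E →L[ℝ] E, (∃ c : ℝ, ∀ n, ‖u n‖ ≤ c) →
    (∀ x : E, Tendsto (fun n => u n x) atTop (nhds (0:E))) →
    ∀ x : E, ∀ ε > (0:ℝ), ∃ N : ℕ, ∀ n ≥ N, ∀ t ∈ Icc (0:ℝ) t₀, ‖(F t (u n)) x‖ < ε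

/-- The Desch–Schappacher admissibility class `𝒮^{DS,τ_sot}_{t₀}(𝒰)` for the implemented
semigroup: `𝒦 : 𝓛(E) → 𝓛(E,E₋₁)` is `τ_sot`-to-`τ_sot` continuous, and the Volterra operator
`(V_𝒦 F)(t)C = ∫₀ᵗ 𝒰₋₁(t-r) 𝒦(F(r)C) dr` takes values in `𝓛(E)`, maps `𝔛_{t₀}` into itself
and has `‖V_𝒦‖ ≤ q < 1`. -/
def MemSDSsot (T₁ : ℝ → E₁ →L[ℝ] E₁) (ι : E →L[ℝ] E₁)
    (K : (E →L[ℝ] E) →L[ℝ] (E →L[ℝ] E₁)) (t₀ : ℝ) : Prop :=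
  (∀ x : E, ∃ (v : Finset E) (c : ℝ), 0 ≤ c ∧
      ∀ S : E →L[ℝ] E, ‖(K S) x‖ ≤ c * ∑ y ∈ v, ‖S y‖) ∧
  ∃ q : ℝ, 0 ≤ q ∧ q < 1 ∧
    ∀ F : ℝ → (E →L[ℝ] E) →L[ℝ] (E →L[ℝ] E), MemXsot t₀ F →
      ∃ G : ℝ → (E →L[ℝ] E) →L[ℝ] (E →L[ℝ] E), MemXsot t₀ G ∧
        (∀ t ∈ Icc (0:ℝ) t₀, ∀ (C : E →L[ℝ] E) (x : E),
          ι ((G t C) x) = ∫ r in (0:ℝ)..t, T₁ (t - r) ((K (F r C)) x)) ∧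
        ∀ c : ℝ, (∀ s ∈ Icc (0:ℝ) t₀, ‖F s‖ ≤ c) → ∀ t ∈ Icc (0:ℝ) t₀, ‖G t‖ ≤ q * c

/-- A `τ_sot`-bi-continuous semigroup on `𝓛(E)`. -/
structure IsBiContSotSemigroup (U : ℝ → (E →L[ℝ] E) →L[ℝ] (E →L[ℝ] E)) : Prop where
  map_zero : U 0 = 1
  map_add : ∀ s t : ℝ, 0 ≤ s → 0 ≤ t → U (s + t) = (U s).comp (U t)
  strongCont : ∀ (C : E →L[ℝ] E) (x : E), ContinuousOn (fun t => (U t C) x) (Ici (0:ℝ))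
  expBound : ∃ M : ℝ, 1 ≤ M ∧ ∃ ω : ℝ, ∀ t : ℝ, 0 ≤ t → ‖U t‖ ≤ M * Real.exp (ω * t)
  biequi : ∀ t₀ : ℝ, 0 < t₀ → ∀ u : ℕ → E →L[ℝ] E, (∃ c : ℝ, ∀ n, ‖u n‖ ≤ c) →
    (∀ x : E, Tendsto (fun n => u n x) atTop (nhds (0:E))) →
    ∀ x : E, ∀ ε > (0:ℝ), ∃ N : ℕ, ∀ n ≥ N, ∀ t ∈ Icc (0:ℝ) t₀, ‖(U t (u n)) x‖ < ε

/-- The generator relation of a `τ_sot`-bi-continuous semigroup on `𝓛(E)`. -/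
def SotGenRel (U : ℝ → (E →L[ℝ] E) →L[ℝ] (E →L[ℝ] E)) (C Y : E →L[ℝ] E) : Prop :=
  (∀ x : E, Tendsto (fun t : ℝ => t⁻¹ • ((U t C) x - C x))
      (nhdsWithin 0 (Ioi 0)) (nhds (Y x))) ∧
    ∃ M : ℝ, ∀ t ∈ Ioc (0:ℝ) 1, ‖U t C - C‖ ≤ M * t

/-- `V` is a `τ_sot`-bi-continuous semigroup on `𝓛(E)` generated by `(𝒢₋₁ + 𝒦)|_{𝓛(E)}`,
where `𝒢₋₁ C = A₋₁ ∘ ι ∘ C` and the domain is `{C : 𝒢₋₁C + 𝒦C ∈ 𝓛(E)}`. -/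
def GeneratedByPerturbedImpl (V : ℝ → (E →L[ℝ] E) →L[ℝ] (E →L[ℝ] E))
    (ι : E →L[ℝ] E₁) (Am : E ≃L[ℝ] E₁)
    (K : (E →L[ℝ] E) →L[ℝ] (E →L[ℝ] E₁)) : Prop :=
  IsBiContSotSemigroup V ∧ ∀ C Y : E →L[ℝ] E,
    SotGenRel V C Y ↔ ι.comp Y = ((Am : E →L[ℝ] E₁)).comp C + K C

section MyAux

variable {E E₁ : Type*} [NormedAddCommGroup E] [NormedSpace ℝ E]
  [NormedAddCommGroup E₁] [NormedSpace ℝ E₁]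

lemma strong_cont_bound [CompleteSpace E] {F : ℝ → E →L[ℝ] E} {a b : ℝ}
    (hF : ∀ x : E, ContinuousOn (fun r => F r x) (Icc a b)) :
    ∃ M : ℝ, 0 ≤ M ∧ ∀ t ∈ Icc a b, ‖F t‖ ≤ M := by
  have hpt : ∀ x : E, ∃ C : ℝ, ∀ i : Icc a b, ‖F i x‖ ≤ C := by
    intro x
    obtain ⟨C, hC⟩ := isCompact_Icc.exists_bound_of_continuousOn (hF x)
    exact ⟨C, fun i => hC i i.2⟩
  obtain ⟨C', hC'⟩ := banach_steinhaus (g := fun i : Icc a b => F i) hpt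
  exact ⟨max C' 0, le_max_right _ _, fun t ht => le_trans (hC' ⟨t, ht⟩) (le_max_left _ _)⟩

lemma c0_loc_bound [CompleteSpace E] {S : ℝ → E →L[ℝ] E} (hS : IsC0Semigroup S) (b : ℝ) :
    ∃ M : ℝ, 0 ≤ M ∧ ∀ t ∈ Icc (0:ℝ) b, ‖S t‖ ≤ M :=
  strong_cont_bound (fun x => (hS.strongCont x).mono Icc_subset_Ici_self)

lemma avg_tendsto [CompleteSpace E] {f : ℝ → E} (hf : ContinuousOn f (Ici (0:ℝ))) {a : ℝ} (ha : 0 ≤ a) :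
    Tendsto (fun t : ℝ => t⁻¹ • ∫ u in a..(a+t), f u) (nhdsWithin 0 (Ioi 0)) (nhds (f a)) := by
  rw [Metric.tendsto_nhdsWithin_nhds]
  intro ε hε
  obtain ⟨δ, hδ0, hδ⟩ := Metric.continuousWithinAt_iff.mp (hf a (mem_Ici.mpr ha)) (ε/2) (half_pos hε)
  refine ⟨δ, hδ0, fun t ht hd => ?_⟩
  have ht0 : (0:ℝ) < t := ht
  have htδ : t < δ := by rwa [Real.dist_eq, sub_zero, abs_of_pos ht0] at hd
  have hsub : uIcc a (a+t) ⊆ Ici 0 := by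
    rw [uIcc_of_le (by linarith)]
    exact fun u hu => le_trans ha hu.1
  have hi : IntervalIntegrable f volume a (a+t) := (hf.mono hsub).intervalIntegrable
  rw [dist_eq_norm]
  have heq : t⁻¹ • (∫ u in a..(a+t), f u) - f a = t⁻¹ • ∫ u in a..(a+t), (f u - f a) := by
    rw [intervalIntegral.integral_sub hi intervalIntegrable_const, smul_sub]
    congr 1
    rw [intervalIntegral.integral_const, add_sub_cancel_left, smul_smul,
      inv_mul_cancel₀ ht0.ne', one_smul]
  rw [heq, norm_smul]
  have hbound : ‖∫ u in a..(a+t), (f u - f a)‖ ≤ (ε/2) * |a + t - a| := by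
    refine intervalIntegral.norm_integral_le_of_norm_le_const fun u hu => ?_
    have hu' : u ∈ Ioc a (a+t) := by rwa [uIoc_of_le (by linarith)] at hu
    have h1 : u ∈ Ici (0:ℝ) := le_trans ha hu'.1.le
    have h2 : dist u a < δ := by
      rw [Real.dist_eq, abs_of_nonneg (by linarith [hu'.1.le])]
      linarith [hu'.2]
    exact le_of_lt (by simpa [dist_eq_norm] using hδ h1 h2)
  rw [add_sub_cancel_left, abs_of_pos ht0] at hbound
  calc ‖t⁻¹‖ * ‖∫ u in a..(a+t), (f u - f a)‖
      ≤ ‖t⁻¹‖ * ((ε/2) * t) := mul_le_mul_of_nonneg_left hbound (norm_nonneg _)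
    _ = ε/2 := by
        rw [Real.norm_eq_abs, abs_of_pos (inv_pos.mpr ht0)]
        field_simp
    _ < ε := half_lt_self hε

lemma keyA [CompleteSpace E] [CompleteSpace E₁]
    (S : ℝ → E →L[ℝ] E) (ι : E →L[ℝ] E₁) (Am : E ≃L[ℝ] E₁)
    (K : (E →L[ℝ] E) →L[ℝ] (E →L[ℝ] E₁))
    (hS : IsC0Semigroup S)
    (hgen : ∀ C Y : E →L[ℝ] E, SotGenRel (implemented S) C Y ↔
      ι.comp Y = ((Am : E →L[ℝ] E₁)).comp C + K C)
    (hK1 : ∀ x : E, ∃ (v : Finset E) (c : ℝ), 0 ≤ c ∧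
      ∀ S' : E →L[ℝ] E, ‖(K S') x‖ ≤ c * ∑ y ∈ v, ‖S' y‖)
    (D : E →L[ℝ] E) (x : E) : K D x = K 1 (D x) := by
  -- integrability helper
  have hInt : ∀ (z : E) (a b : ℝ), 0 ≤ a → 0 ≤ b →
      IntervalIntegrable (fun r => S r z) volume a b := by
    intro z a b ha hb
    refine ((hS.strongCont z).mono ?_).intervalIntegrable
    intro r hr
    exact le_trans (le_min ha hb) ((Set.mem_Icc.mp hr).1)
  -- the averaged operators
  have hQex : ∀ h : ℝ, ∃ C : E →L[ℝ] E, 0 < h →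
      ∀ z, C z = h⁻¹ • ∫ r in (0:ℝ)..h, S r z := by
    intro h
    by_cases hh : 0 < h
    · obtain ⟨M, hM0, hM⟩ := c0_loc_bound hS h
      refine ⟨LinearMap.mkContinuous
        { toFun := fun z => h⁻¹ • ∫ r in (0:ℝ)..h, S r z
          map_add' := fun z w => by
            simp only [map_add]
            rw [intervalIntegral.integral_add (hInt z 0 h le_rfl hh.le)
              (hInt w 0 h le_rfl hh.le), smul_add]
          map_smul' := fun c z => by
            simp only [_root_.map_smul, RingHom.id_apply]
            rw [← intervalIntegral.integral_smul, smul_comm c]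
            simp [_root_.map_smul] } M (fun z => ?_), fun _ z => rfl⟩
      simp only [LinearMap.coe_mk, AddHom.coe_mk]
      rw [norm_smul, Real.norm_eq_abs, abs_of_pos (inv_pos.mpr hh)]
      have hb : ‖∫ r in (0:ℝ)..h, S r z‖ ≤ (M * ‖z‖) * |h - 0| := by
        refine intervalIntegral.norm_integral_le_of_norm_le_const fun u hu => ?_
        have hu' : u ∈ Ioc (0:ℝ) h := by rwa [uIoc_of_le hh.le] at hu
        calc ‖S u z‖ ≤ ‖S u‖ * ‖z‖ := (S u).le_opNorm z
          _ ≤ M * ‖z‖ := mul_le_mul_of_nonneg_right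
              (hM u ⟨hu'.1.le, hu'.2⟩) (norm_nonneg _)
      rw [sub_zero, abs_of_pos hh] at hb
      calc h⁻¹ * ‖∫ r in (0:ℝ)..h, S r z‖ ≤ h⁻¹ * ((M * ‖z‖) * h) :=
            mul_le_mul_of_nonneg_left hb (by positivity)
        _ = M * ‖z‖ := by field_simp
    · exact ⟨0, fun h' => absurd h' hh⟩
  choose Q hQ using hQex
  -- Q h z → z as h → 0+
  have qa : ∀ z : E, Tendsto (fun h => Q h z) (nhdsWithin 0 (Ioi 0)) (nhds z) := by
    intro z
    have h0 : Tendsto (fun t : ℝ => t⁻¹ • ∫ u in (0:ℝ)..(0+t), S u z)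
        (nhdsWithin 0 (Ioi 0)) (nhds (S 0 z)) :=
      avg_tendsto (hS.strongCont z) le_rfl
    have hz : S 0 z = z := by rw [hS.map_zero]; rfl
    rw [hz] at h0
    refine Tendsto.congr' ?_ h0
    filter_upwards [self_mem_nhdsWithin] with h hh
    rw [zero_add]
    exact (hQ h hh z).symm
  -- key integral representation
  have rep : ∀ h : ℝ, 0 < h → ∀ t : ℝ, 0 < t → ∀ z : E,
      S t (Q h z) - Q h z
        = h⁻¹ • ((∫ u in h..(h+t), S u z) - ∫ u in (0:ℝ)..(0+t), S u z) := by
    intro h hh t ht z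
    rw [hQ h hh z, _root_.map_smul, ← smul_sub]
    congr 1
    have hIz : IntervalIntegrable (fun r => S r z) volume 0 h := hInt z 0 h le_rfl hh.le
    have e1 : S t (∫ r in (0:ℝ)..h, S r z) = ∫ r in (0:ℝ)..h, S (t + r) z := by
      rw [← ContinuousLinearMap.intervalIntegral_comp_comm (S t) hIz]
      refine intervalIntegral.integral_congr fun r hr => ?_
      rw [uIcc_of_le hh.le] at hr
      rw [hS.map_add t r ht.le hr.1]
      rfl
    have e2 : (∫ r in (0:ℝ)..h, S (t + r) z) = ∫ u in t..(h+t), S u z := by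
      have := intervalIntegral.integral_comp_add_left (a := (0:ℝ)) (b := h)
        (fun u => S u z) t
      rw [add_zero, add_comm t h] at this
      exact this
    have A1 := intervalIntegral.integral_add_adjacent_intervals
      (hInt z 0 t le_rfl ht.le) (hInt z t (h+t) ht.le (by positivity))
    have A2 := intervalIntegral.integral_add_adjacent_intervals
      (hInt z 0 h le_rfl hh.le) (hInt z h (h+t) hh.le (by positivity))
    have h1' : (∫ u in t..(h+t), S u z)
        = (∫ u in (0:ℝ)..(h+t), S u z) - ∫ u in (0:ℝ)..t, S u z := eq_sub_of_add_eq' A1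
    rw [e1, e2, h1', ← A2, zero_add]
    abel
  -- the averaged operators belong to the domain of the generator
  have hdom : ∀ h : ℝ, 0 < h →
      SotGenRel (implemented S) (Q h) (h⁻¹ • (S h - 1)) := by
    intro h hh
    constructor
    · intro z
      have l1 : Tendsto (fun t : ℝ => t⁻¹ • ∫ u in h..(h+t), S u z)
          (nhdsWithin 0 (Ioi 0)) (nhds (S h z)) := avg_tendsto (hS.strongCont z) hh.le
      have l2 : Tendsto (fun t : ℝ => t⁻¹ • ∫ u in (0:ℝ)..(0+t), S u z)
          (nhdsWithin 0 (Ioi 0)) (nhds z) := by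
        have := avg_tendsto (hS.strongCont z) (le_refl (0:ℝ))
        simpa [hS.map_zero] using this
      have l3 := (l1.sub l2).const_smul (h⁻¹)
      have hval : (h⁻¹ • (S h - 1)) z = h⁻¹ • (S h z - z) := by
        simp [ContinuousLinearMap.smul_apply, ContinuousLinearMap.sub_apply]
      rw [hval]
      refine Tendsto.congr' ?_ l3
      filter_upwards [self_mem_nhdsWithin] with t ht
      have ht0 : (0:ℝ) < t := ht
      have himp : (implemented S t) (Q h) z = S t (Q h z) := by
        simp [implemented]
      rw [himp, rep h hh t ht0 z]
      simp only [smul_sub, smul_comm t⁻¹ h⁻¹]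
    · obtain ⟨M, hM0, hM⟩ := c0_loc_bound hS (h+1)
      refine ⟨h⁻¹ * (2*M), fun t ht => ?_⟩
      have hMt : 0 ≤ h⁻¹ * (2*M) * t :=
        mul_nonneg (mul_nonneg (inv_nonneg.mpr hh.le) (by linarith)) ht.1.le
      refine ContinuousLinearMap.opNorm_le_bound _ hMt fun z => ?_
      have e := rep h hh t ht.1 z
      have happ : (implemented S t (Q h) - Q h) z = S t (Q h z) - Q h z := by
        simp [implemented]
      rw [happ, e, norm_smul, Real.norm_eq_abs, abs_of_pos (inv_pos.mpr hh)]
      have b1 : ‖∫ u in h..(h+t), S u z‖ ≤ (M * ‖z‖) * |h + t - h| := by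
        refine intervalIntegral.norm_integral_le_of_norm_le_const fun u hu => ?_
        have hu' : u ∈ Ioc h (h+t) := by rwa [uIoc_of_le (by linarith [ht.1])] at hu
        calc ‖S u z‖ ≤ ‖S u‖ * ‖z‖ := (S u).le_opNorm z
          _ ≤ M * ‖z‖ := mul_le_mul_of_nonneg_right
              (hM u ⟨by linarith [hu'.1, hh], by linarith [hu'.2, ht.2]⟩) (norm_nonneg _)
      have b2 : ‖∫ u in (0:ℝ)..(0+t), S u z‖ ≤ (M * ‖z‖) * |0 + t - 0| := by
        refine intervalIntegral.norm_integral_le_of_norm_le_const fun u hu => ?_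
        have hu' : u ∈ Ioc (0:ℝ) (0+t) := by rwa [uIoc_of_le (by linarith [ht.1])] at hu
        calc ‖S u z‖ ≤ ‖S u‖ * ‖z‖ := (S u).le_opNorm z
          _ ≤ M * ‖z‖ := mul_le_mul_of_nonneg_right
              (hM u ⟨hu'.1.le, by linarith [hu'.2, ht.2, hh.le]⟩) (norm_nonneg _)
      rw [add_sub_cancel_left, abs_of_pos ht.1] at b1
      rw [show |(0:ℝ) + t - 0| = t from by rw [zero_add, sub_zero]; exact abs_of_pos ht.1] at b2
      calc h⁻¹ * ‖(∫ u in h..(h+t), S u z) - ∫ u in (0:ℝ)..(0+t), S u z‖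
          ≤ h⁻¹ * (‖∫ u in h..(h+t), S u z‖ + ‖∫ u in (0:ℝ)..(0+t), S u z‖) :=
            mul_le_mul_of_nonneg_left (norm_sub_le _ _) (by positivity)
        _ ≤ h⁻¹ * ((M * ‖z‖) * t + (M * ‖z‖) * t) :=
            mul_le_mul_of_nonneg_left (add_le_add b1 b2) (by positivity)
        _ = h⁻¹ * (2*M) * t * ‖z‖ := by ring
  -- the domain is stable under right composition
  have hcomp : ∀ h : ℝ, 0 < h →
      SotGenRel (implemented S) ((Q h).comp D) ((h⁻¹ • (S h - 1)).comp D) := by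
    intro h hh
    obtain ⟨hpt, M, hM⟩ := hdom h hh
    constructor
    · intro z
      have := hpt (D z)
      refine Tendsto.congr' ?_ (by simpa using this)
      filter_upwards [self_mem_nhdsWithin] with t _
      simp [implemented]
    · refine ⟨M * ‖D‖, fun t ht => ?_⟩
      have h1 : implemented S t ((Q h).comp D) - (Q h).comp D
          = (implemented S t (Q h) - Q h).comp D := by
        ext z; simp [implemented]
      rw [h1]
      calc ‖(implemented S t (Q h) - Q h).comp D‖
          ≤ ‖implemented S t (Q h) - Q h‖ * ‖D‖ := ContinuousLinearMap.opNorm_comp_le _ _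
        _ ≤ (M * t) * ‖D‖ := mul_le_mul_of_nonneg_right (hM t ht) (norm_nonneg _)
        _ = (M * ‖D‖) * t := by ring
  have hopD : ∀ h : ℝ, 0 < h → K ((Q h).comp D) = (K (Q h)).comp D := by
    intro h hh
    have e1 := (hgen _ _).mp (hcomp h hh)
    have e2 := congrArg (fun X : E →L[ℝ] E₁ => X.comp D) ((hgen _ _).mp (hdom h hh))
    simp only [ContinuousLinearMap.comp_assoc, ContinuousLinearMap.add_comp] at e2
    rw [e1] at e2
    exact add_left_cancel e2
  -- pass to the limit h → 0⁺
  obtain ⟨v, c, hc0, hb⟩ := hK1 x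
  obtain ⟨v', c', hc0', hb'⟩ := hK1 (D x)
  have t1 : Tendsto (fun h : ℝ => K ((Q h).comp D) x) (nhdsWithin 0 (Ioi 0)) (nhds (K D x)) := by
    rw [← tendsto_sub_nhds_zero_iff]
    refine squeeze_zero_norm (f := fun h => K ((Q h).comp D) x - K D x)
      (a := fun h => c * ∑ y ∈ v, ‖Q h (D y) - D y‖) (fun h => ?_) ?_
    · have hsub : K ((Q h).comp D) x - K D x = K ((Q h).comp D - D) x := by
        rw [map_sub]; simp [ContinuousLinearMap.sub_apply]
      show ‖K ((Q h).comp D) x - K D x‖ ≤ c * ∑ y ∈ v, ‖Q h (D y) - D y‖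
      rw [hsub]
      calc ‖K ((Q h).comp D - D) x‖ ≤ c * ∑ y ∈ v, ‖((Q h).comp D - D) y‖ := hb _
        _ = c * ∑ y ∈ v, ‖Q h (D y) - D y‖ := by
            simp [ContinuousLinearMap.sub_apply, ContinuousLinearMap.comp_apply]
    · have hlim : Tendsto (fun h : ℝ => c * ∑ y ∈ v, ‖Q h (D y) - D y‖)
          (nhdsWithin 0 (Ioi 0)) (nhds (c * ∑ y ∈ v, (0:ℝ))) := by
        refine Tendsto.const_mul _ (tendsto_finset_sum _ fun y _ => ?_)
        have := ((qa (D y)).sub (tendsto_const_nhds (x := D y))).norm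
        simpa using this
      simpa using hlim
  have t2 : Tendsto (fun h : ℝ => K (Q h) (D x)) (nhdsWithin 0 (Ioi 0)) (nhds (K 1 (D x))) := by
    rw [← tendsto_sub_nhds_zero_iff]
    refine squeeze_zero_norm (f := fun h => K (Q h) (D x) - K 1 (D x))
      (a := fun h => c' * ∑ y ∈ v', ‖Q h y - y‖) (fun h => ?_) ?_
    · have hsub : K (Q h) (D x) - K 1 (D x) = K (Q h - 1) (D x) := by
        rw [map_sub]; simp [ContinuousLinearMap.sub_apply]
      show ‖K (Q h) (D x) - K 1 (D x)‖ ≤ c' * ∑ y ∈ v', ‖Q h y - y‖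
      rw [hsub]
      calc ‖K (Q h - 1) (D x)‖ ≤ c' * ∑ y ∈ v', ‖(Q h - 1) y‖ := hb' _
        _ = c' * ∑ y ∈ v', ‖Q h y - y‖ := by
            simp [ContinuousLinearMap.sub_apply]
    · have hlim : Tendsto (fun h : ℝ => c' * ∑ y ∈ v', ‖Q h y - y‖)
          (nhdsWithin 0 (Ioi 0)) (nhds (c' * ∑ y ∈ v', (0:ℝ))) := by
        refine Tendsto.const_mul _ (tendsto_finset_sum _ fun y _ => ?_)
        have := ((qa y).sub (tendsto_const_nhds (x := y))).norm
        simpa using this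
      simpa using hlim
  have hEq : (fun h : ℝ => K ((Q h).comp D) x) =ᶠ[nhdsWithin 0 (Ioi 0)]
      fun h => K (Q h) (D x) := by
    filter_upwards [self_mem_nhdsWithin] with h hh
    rw [hopD h hh]
    rfl
  exact tendsto_nhds_unique (Tendsto.congr' hEq t1) t2



lemma c0gen_norm_bound [CompleteSpace E] {S : ℝ → E →L[ℝ] E} (hS : IsC0Semigroup S)
    {x y : E} (hxy : C0GenRel S x y) :
    ∃ M : ℝ, 0 ≤ M ∧ ∀ t ∈ Ioc (0:ℝ) 1, ‖S t x - x‖ ≤ M * t := by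
  obtain ⟨Mb, hMb0, hMb⟩ := c0_loc_bound hS 1
  have hev : ∀ᶠ t in nhdsWithin (0:ℝ) (Ioi 0), ‖t⁻¹ • (S t x - x)‖ ≤ ‖y‖ + 1 := by
    have h1 : Tendsto (fun t : ℝ => ‖t⁻¹ • (S t x - x)‖) (nhdsWithin 0 (Ioi 0))
        (nhds ‖y‖) := hxy.norm
    exact (h1.eventually_le_const (lt_add_one ‖y‖))
  obtain ⟨δ, hδ0, hδ⟩ := Metric.mem_nhdsWithin_iff.mp hev
  set B : ℝ := Mb * ‖x‖ + ‖x‖ with hB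
  have hB0 : 0 ≤ B := by positivity
  refine ⟨(‖y‖ + 1) + B / δ, by positivity, fun t ht => ?_⟩
  by_cases hcase : t < δ
  · have htmem : t ∈ Metric.ball (0:ℝ) δ ∩ Ioi 0 := by
      constructor
      · rw [Metric.mem_ball, Real.dist_eq, sub_zero, abs_of_pos ht.1]; exact hcase
      · exact ht.1
    have hb := hδ htmem
    have : ‖S t x - x‖ = t * ‖t⁻¹ • (S t x - x)‖ := by
      rw [norm_smul, Real.norm_eq_abs, abs_of_pos (inv_pos.mpr ht.1),
        ← mul_assoc, mul_inv_cancel₀ ht.1.ne', one_mul]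
    rw [this]
    calc t * ‖t⁻¹ • (S t x - x)‖ ≤ t * (‖y‖ + 1) :=
          mul_le_mul_of_nonneg_left hb ht.1.le
      _ ≤ ((‖y‖ + 1) + B / δ) * t := by
          have : 0 ≤ B / δ := by positivity
          nlinarith [ht.1.le]
  · push_neg at hcase
    have h1 : ‖S t x - x‖ ≤ B := by
      calc ‖S t x - x‖ ≤ ‖S t x‖ + ‖x‖ := norm_sub_le _ _
        _ ≤ ‖S t‖ * ‖x‖ + ‖x‖ := by
            have := (S t).le_opNorm x; linarith
        _ ≤ Mb * ‖x‖ + ‖x‖ := by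
            have := hMb t ⟨ht.1.le, ht.2⟩
            have h2 := mul_le_mul_of_nonneg_right this (norm_nonneg x)
            linarith
    calc ‖S t x - x‖ ≤ B := h1
      _ = (B / δ) * δ := by field_simp
      _ ≤ (B / δ) * t := mul_le_mul_of_nonneg_left hcase (by positivity)
      _ ≤ ((‖y‖ + 1) + B / δ) * t := by nlinarith [ht.1.le, norm_nonneg y]

end MyAux

/-- If `𝒦 ∈ 𝒮^{DS,τ_sot}_{t₀}(𝒰)` is such that the perturbed semigroup is
implemented by a `C₀`-semigroup `S`, then `B := 𝒦(Id)` belongs to `𝒮^{DS}_{t₀}(T)` and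
`(A₋₁+B)|_E` generates `S`. -/
theorem stmt_8 [CompleteSpace E] [CompleteSpace E₁]
    (T S : ℝ → E →L[ℝ] E) (T₁ : ℝ → E₁ →L[ℝ] E₁) (ι : E →L[ℝ] E₁) (Am : E ≃L[ℝ] E₁)
    (hExt : ExtrapolationData T T₁ ι Am) (hS : IsC0Semigroup S)
    (t₀ : ℝ) (ht₀ : 0 < t₀) (K : (E →L[ℝ] E) →L[ℝ] (E →L[ℝ] E₁))
    (hK : MemSDSsot T₁ ι K t₀)
    (hgen : GeneratedByPerturbedImpl (implemented S) ι Am K) :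
    MemSDS T₁ ι (K 1) t₀ ∧ ∀ x y : E, C0GenRel S x y ↔ ι y = Am x + (K 1) x := by
  obtain ⟨hbi, hgen2⟩ := hgen
  have keyA' : ∀ (D : E →L[ℝ] E) (x : E), K D x = K 1 (D x) :=
    keyA S ι Am K hS hgen2 hK.1
  obtain ⟨q, hq0, hq1, hVol⟩ := hK.2
  constructor
  · -- Part 1 : MemSDS
    refine ⟨q, hq0, hq1, fun F hF => ?_⟩
    obtain ⟨M, hM0, hM⟩ := strong_cont_bound hF
    have hX : MemXsot t₀ (fun r => implemented F r) := by
      refine ⟨fun C x => ?_, ⟨M, fun t ht => ?_⟩, fun u hub hu0 x ε hε => ?_⟩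
      · have := hF (C x)
        refine this.congr fun t _ => ?_
        simp [implemented]
      · refine ContinuousLinearMap.opNorm_le_bound _ hM0 fun C => ?_
        rw [show (implemented F t) C = (F t).comp C from by simp [implemented]]
        exact le_trans (ContinuousLinearMap.opNorm_comp_le _ _)
          (mul_le_mul_of_nonneg_right (hM t ht) (norm_nonneg _))
      · obtain ⟨N, hN⟩ := (Metric.tendsto_atTop.mp (hu0 x)) (ε / (M+1)) (by positivity)
        refine ⟨N, fun n hn t ht => ?_⟩
        have h1 : (implemented F t (u n)) x = F t (u n x) := by simp [implemented]
        rw [h1]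
        have h2 : ‖u n x‖ < ε / (M+1) := by
          have := hN n hn
          rwa [dist_eq_norm, sub_zero] at this
        calc ‖F t (u n x)‖ ≤ ‖F t‖ * ‖u n x‖ := (F t).le_opNorm _
          _ ≤ (M+1) * ‖u n x‖ := by
              have := hM t ht
              have h3 : ‖F t‖ ≤ M + 1 := by linarith
              exact mul_le_mul_of_nonneg_right h3 (norm_nonneg _)
          _ < (M+1) * (ε / (M+1)) := by
              have hM1 : (0:ℝ) < M + 1 := by linarith
              exact mul_lt_mul_of_pos_left h2 hM1
          _ = ε := by field_simp
    obtain ⟨G, hGX, hGint, hGb⟩ := hVol _ hX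
    refine ⟨fun t => G t 1, fun t ht x => ?_, fun x => ?_, fun c hc t ht => ?_⟩
    · have hI := hGint t ht 1 x
      rw [hI]
      congr 1
      funext r
      congr 1
      have : implemented F r 1 = F r := by
        ext z; simp [implemented]
      rw [this, keyA' (F r) x]
    · have := hGX.1 1 x
      exact this
    · have hc0 : 0 ≤ c := le_trans (norm_nonneg (F 0)) (hc 0 ⟨le_rfl, ht₀.le⟩)
      have hFc : ∀ s ∈ Icc (0:ℝ) t₀, ‖implemented F s‖ ≤ c := by
        intro s hs
        refine ContinuousLinearMap.opNorm_le_bound _ hc0 fun C => ?_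
        rw [show (implemented F s) C = (F s).comp C from by simp [implemented]]
        exact le_trans (ContinuousLinearMap.opNorm_comp_le _ _)
          (mul_le_mul_of_nonneg_right (hc s hs) (norm_nonneg _))
      have hGt := hGb c hFc t ht
      calc ‖G t 1‖ ≤ ‖G t‖ * ‖(1 : E →L[ℝ] E)‖ := (G t).le_opNorm _
        _ ≤ ‖G t‖ * 1 := by
            have h1 : ‖(1 : E →L[ℝ] E)‖ ≤ 1 := ContinuousLinearMap.norm_id_le
            exact mul_le_mul_of_nonneg_left h1 (norm_nonneg (G t))
        _ = ‖G t‖ := mul_one _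
        _ ≤ q * c := hGt
  · -- Part 2 : the generator of S
    intro x y
    constructor
    · intro hxy
      by_cases hx : x = 0
      · subst hx
        unfold C0GenRel at hxy
        have hy : y = 0 := by
          have h0 : Tendsto (fun t : ℝ => t⁻¹ • (S t (0:E) - 0)) (nhdsWithin 0 (Ioi 0))
              (nhds (0:E)) := by
            have he : (fun t : ℝ => t⁻¹ • (S t (0:E) - 0)) = fun _ => (0:E) := by
              funext t; simp
            rw [he]; exact tendsto_const_nhds
          exact tendsto_nhds_unique hxy h0
        subst hy
        simp
      · obtain ⟨g, hg1, hgx⟩ := exists_dual_vector ℝ x (norm_ne_zero_iff.mpr hx)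
        have hxn : ‖x‖ ≠ 0 := norm_ne_zero_iff.mpr hx
        set φ : E →L[ℝ] ℝ := ‖x‖⁻¹ • g with hφ
        have hφx : φ x = 1 := by
          rw [hφ]
          simp only [ContinuousLinearMap.smul_apply, hgx, smul_eq_mul]
          field_simp
          rfl
        set C : E →L[ℝ] E := φ.smulRight x with hCdef
        set Y : E →L[ℝ] E := φ.smulRight y with hYdef
        have hC : SotGenRel (implemented S) C Y := by
          constructor
          · intro z
            have h1 : Tendsto (fun t : ℝ => φ z • (t⁻¹ • (S t x - x)))
                (nhdsWithin 0 (Ioi 0)) (nhds (φ z • y)) := hxy.const_smul (φ z)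
            have hYz : Y z = φ z • y := by simp [hYdef]
            rw [hYz]
            refine Tendsto.congr (fun t => ?_) h1
            have hc1 : (implemented S t) C z = φ z • S t x := by
              simp [implemented, hCdef]
            have hc2 : C z = φ z • x := by simp [hCdef]
            rw [hc1, hc2, ← smul_sub, smul_comm]
          · obtain ⟨M, hM0, hM⟩ := c0gen_norm_bound hS hxy
            refine ⟨‖φ‖ * M, fun t ht => ?_⟩
            have hb0 : 0 ≤ ‖φ‖ * M * t := mul_nonneg (mul_nonneg (norm_nonneg _) hM0) ht.1.le
            refine ContinuousLinearMap.opNorm_le_bound _ hb0 fun z => ?_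
            have happ : (implemented S t C - C) z = φ z • (S t x - x) := by
              simp [implemented, hCdef, smul_sub]
            rw [happ, norm_smul]
            calc ‖φ z‖ * ‖S t x - x‖ ≤ (‖φ‖ * ‖z‖) * (M * t) :=
                  mul_le_mul (φ.le_opNorm z) (hM t ht) (norm_nonneg _) (by positivity)
              _ = (‖φ‖ * M * t) * ‖z‖ := by ring
        have heq := (hgen2 C Y).mp hC
        have happx := congrArg (fun L : E →L[ℝ] E₁ => L x) heq
        simp only [ContinuousLinearMap.comp_apply, ContinuousLinearMap.add_apply,
          ContinuousLinearMap.coe_coe] at happx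
        have hYx : Y x = y := by simp [hYdef, hφx]
        have hCx : C x = x := by simp [hCdef, hφx]
        rw [hYx, hCx] at happx
        rw [happx, keyA' C x, hCx]
        rfl
    · intro hxy
      by_cases hx : x = 0
      · subst hx
        have hι : ι y = 0 := by simpa using hxy
        have hy : y = 0 := hExt.inj (by simpa using hι)
        subst hy
        have : (fun t : ℝ => t⁻¹ • (S t (0:E) - 0)) = fun _ => (0:E) := by
          funext t; simp
        unfold C0GenRel
        rw [this]
        exact tendsto_const_nhds
      · obtain ⟨g, hg1, hgx⟩ := exists_dual_vector ℝ x (norm_ne_zero_iff.mpr hx)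
        have hxn : ‖x‖ ≠ 0 := norm_ne_zero_iff.mpr hx
        set φ : E →L[ℝ] ℝ := ‖x‖⁻¹ • g with hφ
        have hφx : φ x = 1 := by
          rw [hφ]
          simp only [ContinuousLinearMap.smul_apply, hgx, smul_eq_mul]
          field_simp
          rfl
        set C : E →L[ℝ] E := φ.smulRight x with hCdef
        set Y : E →L[ℝ] E := φ.smulRight y with hYdef
        have hop : ι.comp Y = ((Am : E →L[ℝ] E₁)).comp C + K C := by
          ext z
          simp only [ContinuousLinearMap.comp_apply, ContinuousLinearMap.add_apply,
            ContinuousLinearMap.coe_coe]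
          have hYz : Y z = φ z • y := by simp [hYdef]
          have hCz : C z = φ z • x := by simp [hCdef]
          rw [hYz, hCz, keyA' C z, hCz]
          rw [_root_.map_smul ι, _root_.map_smul ((Am : E →L[ℝ] E₁)),
            _root_.map_smul (K 1), hxy, smul_add]
          rfl
        have hC := (hgen2 C Y).mpr hop
        have hpt := hC.1 x
        unfold C0GenRel
        have hCx : C x = x := by simp [hCdef, hφx]
        have hYx : Y x = y := by simp [hYdef, hφx]
        rw [hYx] at hpt
        refine Tendsto.congr (fun t => ?_) hpt
        have : (implemented S t) C x = S t x := by
          simp [implemented, hCdef, hφx]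
        rw [this, hCx]
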